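/- For all integers n ≥ 2, ∑_{k=0}^{n-1} (4k+1) binom(2k,k)^2 · 16^{n-1-k} ≡ 0 (mod n·binom(2n,n)). -/

import Mathlib

private lemma key_rel (m : ℕ) :
    (m + 1) * Nat.choose (2 * (m + 1)) (m + 1) = 2 * (2 * m + 1) * Nat.choose (2 * m) m := by
  have := Nat.succ_mul_centralBinom_succ m
  simpa [Nat.centralBinom] using this

private lemma closed_form (m : ℕ) :
    ∑ k ∈ Finset.range (m + 1),
        (4 * (k : ℤ) + 1) * (Nat.choose (2 * k) k : ℤ) ^ 2 * 16 ^ (m - k)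
      = ((2 * (m : ℤ) + 1) * (Nat.choose (2 * m) m : ℤ)) ^ 2 := by
  induction m with
  | zero => simp
  | succ m ih =>
    rw [Finset.sum_range_succ]
    have hstep : ∑ k ∈ Finset.range (m + 1),
        (4 * (k : ℤ) + 1) * (Nat.choose (2 * k) k : ℤ) ^ 2 * 16 ^ (m + 1 - k)
        = 16 * ∑ k ∈ Finset.range (m + 1),
            (4 * (k : ℤ) + 1) * (Nat.choose (2 * k) k : ℤ) ^ 2 * 16 ^ (m - k) := by
      rw [Finset.mul_sum]
      refine Finset.sum_congr rfl fun k hk => ?_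
      have hk' : k ≤ m := Nat.lt_succ_iff.mp (Finset.mem_range.mp hk)
      have : m + 1 - k = (m - k) + 1 := by omega
      rw [this, pow_succ]
      ring
    rw [hstep, ih]
    have hrel : ((m : ℤ) + 1) * (Nat.choose (2 * (m + 1)) (m + 1) : ℤ)
        = 2 * (2 * (m : ℤ) + 1) * (Nat.choose (2 * m) m : ℤ) := by
      exact_mod_cast congrArg (fun x : ℕ => (x : ℤ)) (key_rel m)
    simp only [Nat.sub_self, pow_zero, mul_one]
    have hsq := congrArg (· ^ 2) hrel
    push_cast at hsq ⊢
    linear_combination -4 * hsq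

private lemma central_even (m : ℕ) :
    Nat.choose (2 * (m + 1)) (m + 1) = 2 * Nat.choose (2 * m + 1) m := by
  have h1 : Nat.choose (2 * m + 1 + 1) (m + 1)
      = Nat.choose (2 * m + 1) m + Nat.choose (2 * m + 1) (m + 1) :=
    Nat.choose_succ_succ (2 * m + 1) m
  have h2 : Nat.choose (2 * m + 1) (m + 1) = Nat.choose (2 * m + 1) m := by
    have := Nat.choose_symm (n := 2 * m + 1) (k := m) (by omega)
    have he : 2 * m + 1 - m = m + 1 := by omega
    rw [he] at this
    exact this
  have h3 : 2 * (m + 1) = 2 * m + 1 + 1 := by omega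
  rw [h3, h1, h2]; omega

theorem binomial_sum_div_rho_two (n : ℕ) (hn : 2 ≤ n) :
    ((n : ℤ) * Nat.choose (2 * n) n) ∣
      ∑ k ∈ Finset.range n,
        (4 * (k : ℤ) + 1) * (Nat.choose (2 * k) k : ℤ) ^ 2 * 16 ^ (n - 1 - k) := by
  obtain ⟨m, rfl⟩ : ∃ m, n = m + 1 := ⟨n - 1, by omega⟩
  have hsum : ∑ k ∈ Finset.range (m + 1),
      (4 * (k : ℤ) + 1) * (Nat.choose (2 * k) k : ℤ) ^ 2 * 16 ^ (m + 1 - 1 - k)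
      = ((2 * (m : ℤ) + 1) * (Nat.choose (2 * m) m : ℤ)) ^ 2 := by
    have : ∀ k, m + 1 - 1 - k = m - k := fun k => by omega
    simp only [this]
    exact closed_form m
  rw [hsum]
  have hrel : ((m : ℤ) + 1) * (Nat.choose (2 * (m + 1)) (m + 1) : ℤ)
      = 2 * (2 * (m : ℤ) + 1) * (Nat.choose (2 * m) m : ℤ) := by
    exact_mod_cast congrArg (fun x : ℕ => (x : ℤ)) (key_rel m)
  have hm : 1 ≤ m := by omega
  obtain ⟨j, rfl⟩ : ∃ j, m = j + 1 := ⟨m - 1, by omega⟩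
  have heven : (Nat.choose (2 * (j + 1)) (j + 1) : ℤ) = 2 * (Nat.choose (2 * j + 1) j : ℤ) := by
    exact_mod_cast congrArg (fun x : ℕ => (x : ℤ)) (central_even j)
  rw [heven] at hrel ⊢
  push_cast
  refine ⟨(2 * (j : ℤ) + 2 + 1) * (Nat.choose (2 * j + 1) j : ℤ), ?_⟩
  push_cast at hrel ⊢
  linear_combination (-(2 * (j : ℤ) + 3) * (Nat.choose (2 * j + 1) j : ℤ)) * hrel
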